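/- arXiv:2310.17886 — 2 statements merged into one kernel-verified Lean document; each statement's English description precedes it below -/
import Mathlib

section
/- There exists an absolute constant c > 0 such that for every real ε > 0 there exists a constant C(ε) > 0 with the following property. For every connected n-vertex graph G = (V, E) with n ≥ 2 and every integer r with 1 ≤ r ≤ n, there exist vertices v_1, …, v_k ∈ V and positive integers r_1, …, r_k with r ≤ r_i ≤ r·n^{c·ε} for each i, such that: (Coverage) every vertex v ∈ V satisfies dist_G(v, v_i) ≤ r_i for some i ∈ {1, …, k}; and (Low Overlap) the sum over i of |B(v_i, 2r_i)| is at most C(ε)·n. -/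
open SimpleGraph

/-- The ball of radius `ρ` around `v` in `G`. -/
def gball {V : Type*} (G : SimpleGraph V) (v : V) (ρ : ℕ) : Set V :=
  {u | G.dist v u ≤ ρ}

namespace ClusteringAux

variable {n : ℕ}

/-- Finset version of the ball. -/
noncomputable def fball (G : SimpleGraph (Fin n)) (v : Fin n) (ρ : ℕ) : Finset (Fin n) :=
  Finset.univ.filter (fun u => G.dist v u ≤ ρ)

lemma mem_fball {G : SimpleGraph (Fin n)} {v u : Fin n} {ρ : ℕ} :
    u ∈ fball G v ρ ↔ G.dist v u ≤ ρ := by simp [fball]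

lemma gball_ncard (G : SimpleGraph (Fin n)) (v : Fin n) (ρ : ℕ) :
    (gball G v ρ).ncard = (fball G v ρ).card := by
  have h : gball G v ρ = ↑(fball G v ρ) := by
    ext u; simp [gball, mem_fball]
  rw [h, Set.ncard_coe_finset]

lemma fball_mono (G : SimpleGraph (Fin n)) (v : Fin n) {ρ₁ ρ₂ : ℕ} (h : ρ₁ ≤ ρ₂) :
    fball G v ρ₁ ⊆ fball G v ρ₂ := by
  intro u hu
  rw [mem_fball] at *
  omega

lemma self_mem_fball (G : SimpleGraph (Fin n)) (v : Fin n) (ρ : ℕ) :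
    v ∈ fball G v ρ := by
  rw [mem_fball, SimpleGraph.dist_self]
  exact Nat.zero_le _

lemma card_fball_pos (G : SimpleGraph (Fin n)) (v : Fin n) (ρ : ℕ) :
    1 ≤ (fball G v ρ).card :=
  Finset.card_pos.mpr ⟨v, self_mem_fball G v ρ⟩

lemma card_fball_le (G : SimpleGraph (Fin n)) (v : Fin n) (ρ : ℕ) :
    (fball G v ρ).card ≤ n := by
  simpa using Finset.card_le_univ (fball G v ρ)

/-- The growth condition: the ball of radius `4·(r·4^j)` is at most `M` times
bigger than the ball of radius `r·4^j`. -/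
def Good (G : SimpleGraph (Fin n)) (r M : ℕ) (u : Fin n) (j : ℕ) : Prop :=
  (fball G u (r * 4 ^ (j + 1))).card ≤ M * (fball G u (r * 4 ^ j)).card

noncomputable instance (G : SimpleGraph (Fin n)) (r M : ℕ) (u : Fin n) : DecidablePred (Good G r M u) :=
  fun _ => Classical.dec _

lemma growth_of_bad (G : SimpleGraph (Fin n)) (r M : ℕ) (u : Fin n) (j : ℕ)
    (h : ∀ j' < j, ¬ Good G r M u j') :
    M ^ j ≤ (fball G u (r * 4 ^ j)).card := by
  induction j with
  | zero => simp only [pow_zero, Nat.mul_one]; exact card_fball_pos G u r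
  | succ j ih =>
    have hb : ¬ Good G r M u j := h j (Nat.lt_succ_self j)
    have hlt : M * (fball G u (r * 4 ^ j)).card < (fball G u (r * 4 ^ (j + 1))).card := by
      unfold Good at hb; omega
    have hih : M ^ j ≤ (fball G u (r * 4 ^ j)).card :=
      ih (fun j' hj' => h j' (Nat.lt_succ_of_lt hj'))
    calc M ^ (j + 1) = M * M ^ j := by ring
      _ ≤ M * (fball G u (r * 4 ^ j)).card := Nat.mul_le_mul_left M hih
      _ ≤ (fball G u (r * 4 ^ (j + 1))).card := le_of_lt hlt

lemma exists_good (G : SimpleGraph (Fin n)) (r M : ℕ) (hM : 2 ≤ M) (u : Fin n) :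
    ∃ j, Good G r M u j := by
  by_contra hc
  push_neg at hc
  have key := growth_of_bad G r M u n (fun j' _ => hc j')
  have h1 : 2 ^ n ≤ M ^ n := Nat.pow_le_pow_left hM n
  have h2 : n < 2 ^ n := Nat.lt_two_pow_self
  have h3 := card_fball_le G u (r * 4 ^ n)
  omega

/-- The level of a vertex: the minimal good radius exponent. -/
noncomputable def lvl (G : SimpleGraph (Fin n)) (r M : ℕ) (hM : 2 ≤ M) (u : Fin n) : ℕ :=
  Nat.find (exists_good G r M hM u)

lemma lvl_good (G : SimpleGraph (Fin n)) (r M : ℕ) (hM : 2 ≤ M) (u : Fin n) :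
    Good G r M u (lvl G r M hM u) :=
  Nat.find_spec (exists_good G r M hM u)

lemma pow_lvl_le (G : SimpleGraph (Fin n)) (r M : ℕ) (hM : 2 ≤ M) (u : Fin n) :
    M ^ (lvl G r M hM u) ≤ n := by
  have hmin : ∀ j' < lvl G r M hM u, ¬ Good G r M u j' :=
    fun j' hj' => Nat.find_min (exists_good G r M hM u) hj'
  exact le_trans (growth_of_bad G r M u _ hmin) (card_fball_le G u _)

lemma lvl_le_n (G : SimpleGraph (Fin n)) (r M : ℕ) (hM : 2 ≤ M) (u : Fin n) :
    lvl G r M hM u ≤ n := by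
  have h1 := pow_lvl_le G r M hM u
  have h2 : lvl G r M hM u < 2 ^ (lvl G r M hM u) := Nat.lt_two_pow_self
  have h3 : 2 ^ (lvl G r M hM u) ≤ M ^ (lvl G r M hM u) := Nat.pow_le_pow_left hM _
  omega

/-- The main greedy construction, with fuel `N`. -/
lemma build (G : SimpleGraph (Fin n)) (hG : G.Connected) (r M : ℕ) (hM : 2 ≤ M) :
    ∀ (N : ℕ) (S : Finset (Fin n)) (bnd : ℕ), S.card ≤ N →
    (∀ u ∈ S, lvl G r M hM u ≤ bnd) →
    ∃ L : List (Fin n × ℕ),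
      (∀ p ∈ L, p.1 ∈ S ∧ p.2 ≤ bnd ∧ Good G r M p.1 p.2 ∧ M ^ p.2 ≤ n) ∧
      (∀ x ∈ S, ∃ p ∈ L, G.dist p.1 x ≤ 2 * (r * 4 ^ p.2)) ∧
      List.Pairwise
        (fun p q => Disjoint (fball G p.1 (r * 4 ^ p.2)) (fball G q.1 (r * 4 ^ q.2))) L := by
  intro N
  induction N with
  | zero =>
    intro S bnd hS _
    have : S = ∅ := Finset.card_eq_zero.mp (Nat.le_zero.mp hS)
    subst this
    exact ⟨[], by simp, by simp, by simp⟩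
  | succ N ih =>
    intro S bnd hS hbnd
    rcases S.eq_empty_or_nonempty with rfl | hne
    · exact ⟨[], by simp, by simp, by simp⟩
    · obtain ⟨u, huS, hmax⟩ := Finset.exists_max_image S (lvl G r M hM) hne
      set j := lvl G r M hM u with hj
      set S' := S.filter (fun x => ¬ G.dist u x ≤ 2 * (r * 4 ^ j)) with hS'
      have hS'sub : S' ⊆ S := Finset.filter_subset _ _
      have huNot : u ∉ S' := by
        simp only [hS', Finset.mem_filter]
        intro h
        exact h.2 (by rw [SimpleGraph.dist_self]; exact Nat.zero_le _)
      have hcard : S'.card ≤ N := by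
        have : S'.card < S.card := Finset.card_lt_card ⟨hS'sub, fun h => huNot (h huS)⟩
        omega
      obtain ⟨L', hL'mem, hL'cov, hL'pw⟩ := ih S' j hcard
        (fun x hx => hmax x (hS'sub hx))
      refine ⟨(u, j) :: L', ?_, ?_, ?_⟩
      · rintro p hp
        rcases List.mem_cons.mp hp with rfl | hp'
        · exact ⟨huS, hbnd u huS, lvl_good G r M hM u, pow_lvl_le G r M hM u⟩
        · obtain ⟨h1, h2, h3, h4⟩ := hL'mem p hp'
          exact ⟨hS'sub h1, le_trans h2 (hbnd u huS), h3, h4⟩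
      · intro x hx
        by_cases hd : G.dist u x ≤ 2 * (r * 4 ^ j)
        · exact ⟨(u, j), List.mem_cons_self, hd⟩
        · have hx' : x ∈ S' := by
            simp only [hS', Finset.mem_filter]
            exact ⟨hx, hd⟩
          obtain ⟨p, hp, hpd⟩ := hL'cov x hx'
          exact ⟨p, List.mem_cons_of_mem _ hp, hpd⟩
      · refine List.pairwise_cons.mpr ⟨?_, hL'pw⟩
        intro q hq
        obtain ⟨hq1, hq2, _, _⟩ := hL'mem q hq
        have hqfar : ¬ G.dist u q.1 ≤ 2 * (r * 4 ^ j) := by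
          have := Finset.mem_filter.mp hq1
          exact this.2
        rw [Finset.disjoint_left]
        intro x hx1 hx2
        rw [mem_fball] at hx1 hx2
        have hx1' : G.dist u x ≤ r * 4 ^ j := hx1
        apply hqfar
        have htri : G.dist u q.1 ≤ G.dist u x + G.dist x q.1 := hG.dist_triangle
        have hcomm : G.dist x q.1 = G.dist q.1 x := SimpleGraph.dist_comm
        have hle : r * 4 ^ q.2 ≤ r * 4 ^ j :=
          Nat.mul_le_mul_left r (Nat.pow_le_pow_right (by norm_num) hq2)
        omega

lemma sum_card_aux : ∀ (t : List (Finset (Fin n))) (a : Finset (Fin n)),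
    t.Pairwise Disjoint → (∀ b ∈ t, Disjoint a b) →
    a.card + (t.map Finset.card).sum ≤ n := by
  intro t
  induction t with
  | nil =>
    intro a _ _
    simpa using Finset.card_le_univ a
  | cons b t'' iht'' =>
    intro a hpw' hdisj
    rw [List.pairwise_cons] at hpw'
    have hab : Disjoint a b := hdisj b (List.mem_cons_self)
    have hunion : ∀ c ∈ t'', Disjoint (a ∪ b) c := by
      intro c hc
      exact Finset.disjoint_union_left.mpr
        ⟨hdisj c (List.mem_cons_of_mem _ hc), hpw'.1 c hc⟩
    have := iht'' (a ∪ b) hpw'.2 hunion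
    rw [Finset.card_union_of_disjoint hab] at this
    simp only [List.map_cons, List.sum_cons]
    omega

/-- Sum of cards of a pairwise disjoint list of finsets is at most `n`. -/
lemma sum_card_le (L : List (Finset (Fin n))) (h : L.Pairwise Disjoint) :
    (L.map Finset.card).sum ≤ n := by
  cases L with
  | nil => simp
  | cons a t =>
    rw [List.pairwise_cons] at h
    have := sum_card_aux t a h.2 h.1
    simp only [List.map_cons, List.sum_cons]
    omega

end ClusteringAux

open ClusteringAux

theorem clustering_decomposition :
    ∃ c : ℝ, 0 < c ∧
      ∀ ε : ℝ, 0 < ε → ∃ C : ℝ, 0 < C ∧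
        ∀ n : ℕ, 2 ≤ n → ∀ G : SimpleGraph (Fin n), G.Connected →
          ∀ r : ℕ, 1 ≤ r → r ≤ n →
            ∃ (k : ℕ) (v : Fin k → Fin n) (rad : Fin k → ℕ),
              (∀ i : Fin k, r ≤ rad i ∧ (rad i : ℝ) ≤ (r : ℝ) * (n : ℝ) ^ (c * ε)) ∧
              (∀ u : Fin n, ∃ i : Fin k, G.dist (v i) u ≤ rad i) ∧
              ((∑ i : Fin k, (gball G (v i) (2 * rad i)).ncard : ℕ) : ℝ) ≤ C * n := by
  refine ⟨1, one_pos, ?_⟩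
  intro ε hε
  -- parameters
  set m : ℕ := ⌈4 / ε⌉₊ with hm
  have hm1 : 1 ≤ m := by
    rw [hm]
    exact Nat.one_le_ceil_iff.mpr (by positivity)
  set M : ℕ := 4 ^ m with hM
  have hM2 : 2 ≤ M := by
    calc (2:ℕ) ≤ 4 ^ 1 := by norm_num
      _ ≤ 4 ^ m := Nat.pow_le_pow_right (by norm_num) hm1
  set Nbig : ℕ := ⌈(2:ℝ) ^ (4 / ε)⌉₊ + 2 with hNbig
  refine ⟨(M : ℝ) + (Nbig : ℝ), by positivity, ?_⟩
  intro n hn G hG r hr hrn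
  have hn1 : (1:ℝ) ≤ (n:ℝ) := by exact_mod_cast Nat.one_le_of_lt hn
  have hnpos : (0:ℝ) < (n:ℝ) := by linarith
  by_cases hsmall : n < Nbig
  · -- trivial clustering: every vertex is a center with radius r
    refine ⟨n, id, fun _ => r, ?_, ?_, ?_⟩
    · intro i
      refine ⟨le_refl r, ?_⟩
      have h1 : (1:ℝ) ≤ (n:ℝ) ^ (1 * ε) := by
        have := Real.rpow_le_rpow_of_exponent_le hn1 (by positivity : (0:ℝ) ≤ 1 * ε)
        rwa [Real.rpow_zero] at this
      nlinarith [(show (0:ℝ) < (r:ℝ) by exact_mod_cast Nat.lt_of_lt_of_le Nat.zero_lt_one hr)]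
    · intro u
      exact ⟨u, by simp [SimpleGraph.dist_self]⟩
    · have hball : ∀ i : Fin n, (gball G (id i) (2 * r)).ncard ≤ n := by
        intro i
        rw [gball_ncard]
        exact card_fball_le G i (2 * r)
      have hsum : (∑ i : Fin n, (gball G (id i) (2 * r)).ncard) ≤ n * n := by
        calc (∑ i : Fin n, (gball G (id i) (2 * r)).ncard)
            ≤ ∑ _i : Fin n, n := Finset.sum_le_sum (fun i _ => hball i)
          _ = n * n := by simp [Finset.sum_const, Finset.card_univ, Nat.mul_comm]
      have h1 : ((∑ i : Fin n, (gball G (id i) (2 * r)).ncard : ℕ) : ℝ) ≤ (n:ℝ) * n := by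
        exact_mod_cast hsum
      have h2 : (n:ℝ) ≤ (Nbig:ℝ) := by exact_mod_cast le_of_lt hsmall
      nlinarith
  · -- main case : n ≥ Nbig
    push_neg at hsmall
    obtain ⟨L, hLmem, hLcov, hLpw⟩ :=
      build G hG r M hM2 n Finset.univ n (by simp) (fun u _ => lvl_le_n G r M hM2 u)
    refine ⟨L.length, fun i => (L.get i).1, fun i => 2 * (r * 4 ^ (L.get i).2), ?_, ?_, ?_⟩
    · intro i
      have hpmem : L.get i ∈ L := L.get_mem i
      obtain ⟨_, _, _, hpow⟩ := hLmem _ hpmem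
      set j := (L.get i).2 with hjdef
      constructor
      · calc r = r * 1 := (Nat.mul_one r).symm
          _ ≤ r * 4 ^ j := Nat.mul_le_mul_left r (Nat.one_le_pow _ _ (by norm_num))
          _ ≤ 2 * (r * 4 ^ j) := by omega
      · -- real bound : 2 * (r * 4^j) ≤ r * n^ε
        have hrpos : (0:ℝ) < (r:ℝ) := by exact_mod_cast Nat.lt_of_lt_of_le Nat.zero_lt_one hr
        -- (4:ℝ)^j ≤ n^(ε/4)
        have hMn : ((4:ℝ) ^ j) ^ m ≤ (n:ℝ) := by
          have : (M:ℕ) ^ j ≤ n := hpow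
          have hcast : ((M ^ j : ℕ) : ℝ) ≤ (n : ℝ) := by exact_mod_cast this
          calc ((4:ℝ) ^ j) ^ m = ((4:ℝ) ^ m) ^ j := by
                rw [← pow_mul, ← pow_mul, Nat.mul_comm j m]
            _ = ((M ^ j : ℕ) : ℝ) := by
                rw [hM]; push_cast; ring
            _ ≤ (n:ℝ) := hcast
        have h4j : (4:ℝ) ^ j ≤ (n:ℝ) ^ ((1:ℝ)/m) := by
          have hbase : (0:ℝ) ≤ (4:ℝ) ^ j := by positivity
          have hmr : (0:ℝ) < (m:ℝ) := by exact_mod_cast hm1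
          have step1 : ((4:ℝ) ^ j) ^ (m:ℝ) ≤ (n:ℝ) := by
            rw [Real.rpow_natCast]; exact hMn
          have step2 : (((4:ℝ) ^ j) ^ (m:ℝ)) ^ ((1:ℝ)/m) ≤ (n:ℝ) ^ ((1:ℝ)/m) :=
            Real.rpow_le_rpow (by positivity) step1 (by positivity)
          rwa [← Real.rpow_mul hbase, mul_one_div, div_self (ne_of_gt hmr),
            Real.rpow_one] at step2
        have hinv : (1:ℝ)/m ≤ ε/4 := by
          have hcm : (4:ℝ)/ε ≤ (m:ℝ) := Nat.le_ceil _
          rw [div_le_div_iff₀ (by exact_mod_cast hm1) (by norm_num)]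
          calc (1:ℝ) * 4 = 4 := by ring
            _ ≤ ε * (m:ℝ) := by
                rw [div_le_iff₀ hε] at hcm
                linarith [hcm]
        have h4j' : (4:ℝ) ^ j ≤ (n:ℝ) ^ (ε/4) := by
          calc (4:ℝ) ^ j ≤ (n:ℝ) ^ ((1:ℝ)/m) := h4j
            _ ≤ (n:ℝ) ^ (ε/4) := Real.rpow_le_rpow_of_exponent_le hn1 hinv
        -- 2 ≤ n^(ε/4)
        have h2n : (2:ℝ) ≤ (n:ℝ) ^ (ε/4) := by
          have hNle : ((2:ℝ) ^ (4/ε)) ≤ (n:ℝ) := by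
            have h1 : ((2:ℝ) ^ (4/ε)) ≤ (⌈(2:ℝ) ^ (4/ε)⌉₊ : ℝ) := Nat.le_ceil _
            have h2 : ((⌈(2:ℝ) ^ (4/ε)⌉₊ : ℕ) : ℝ) ≤ (n:ℝ) := by
              have : ⌈(2:ℝ) ^ (4/ε)⌉₊ ≤ n := by omega
              exact_mod_cast this
            linarith
          have := Real.rpow_le_rpow (by positivity) hNle (le_of_lt (by positivity : (0:ℝ) < ε/4))
          rwa [← Real.rpow_mul (by norm_num : (0:ℝ) ≤ 2), div_mul_div_comm,
            mul_comm (4:ℝ) ε, mul_div_mul_left _ _ (ne_of_gt hε) , div_self (by norm_num : (4:ℝ) ≠ 0),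
            Real.rpow_one] at this
        -- combine
        have hcomb : ((2 * (r * 4 ^ j) : ℕ) : ℝ) ≤ (r:ℝ) * ((n:ℝ) ^ (ε/4) * (n:ℝ) ^ (ε/4)) := by
          have h4jpos : (0:ℝ) ≤ (4:ℝ) ^ j := by positivity
          have hA0 : (0:ℝ) ≤ (n:ℝ) ^ (ε/4) := Real.rpow_nonneg (le_of_lt hnpos) _
          have key : (2:ℝ) * (4:ℝ) ^ j ≤ (n:ℝ) ^ (ε/4) * (n:ℝ) ^ (ε/4) :=
            mul_le_mul h2n h4j' h4jpos hA0
          push_cast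
          nlinarith [mul_le_mul_of_nonneg_left key (le_of_lt hrpos)]
        have hmul : (n:ℝ) ^ (ε/4) * (n:ℝ) ^ (ε/4) = (n:ℝ) ^ (ε/2) := by
          rw [← Real.rpow_add hnpos]; ring_nf
        have hfin : (n:ℝ) ^ (ε/2) ≤ (n:ℝ) ^ (1 * ε) := by
          apply Real.rpow_le_rpow_of_exponent_le hn1
          linarith
        calc ((2 * (r * 4 ^ j) : ℕ) : ℝ) ≤ (r:ℝ) * ((n:ℝ) ^ (ε/4) * (n:ℝ) ^ (ε/4)) := hcomb
          _ = (r:ℝ) * (n:ℝ) ^ (ε/2) := by rw [hmul]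
          _ ≤ (r:ℝ) * (n:ℝ) ^ (1 * ε) := by
              apply mul_le_mul_of_nonneg_left hfin (by positivity)
    · intro u
      obtain ⟨p, hp, hpd⟩ := hLcov u (Finset.mem_univ u)
      obtain ⟨i, hi⟩ := List.get_of_mem hp
      refine ⟨i, ?_⟩
      show G.dist (L.get i).1 u ≤ 2 * (r * 4 ^ (L.get i).2)
      rw [hi]
      exact hpd
    · -- the overlap bound
      have hterm : ∀ i : Fin L.length,
          (gball G (L.get i).1 (2 * (2 * (r * 4 ^ (L.get i).2)))).ncard =
            (fball G (L.get i).1 (r * 4 ^ ((L.get i).2 + 1))).card := by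
        intro i
        rw [gball_ncard]
        congr 1
        rw [pow_succ]
        ring_nf
      have hgood : ∀ p ∈ L, (fball G p.1 (r * 4 ^ (p.2 + 1))).card ≤
          M * (fball G p.1 (r * 4 ^ p.2)).card := by
        intro p hp
        exact (hLmem p hp).2.2.1
      -- convert Fin-sum to list sum
      have hsum_eq : (∑ i : Fin L.length,
            (fball G (L.get i).1 (r * 4 ^ ((L.get i).2 + 1))).card) =
          (L.map (fun p => (fball G p.1 (r * 4 ^ (p.2 + 1))).card)).sum := by
        rw [← List.sum_ofFn]
        congr 1
        exact List.ofFn_getElem_eq_map L (fun p => (fball G p.1 (r * 4 ^ (p.2 + 1))).card)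
      have hsum_eq2 : (L.map (fun p => M * (fball G p.1 (r * 4 ^ p.2)).card)).sum =
          M * (L.map (fun p => (fball G p.1 (r * 4 ^ p.2)).card)).sum := by
        exact List.sum_map_mul_left L (fun p => (fball G p.1 (r * 4 ^ p.2)).card) M
      have hdisj : (L.map (fun p => fball G p.1 (r * 4 ^ p.2))).Pairwise Disjoint :=
        List.Pairwise.map _ (fun p q h => h) hLpw
      have hinner : (L.map (fun p => (fball G p.1 (r * 4 ^ p.2)).card)).sum ≤ n := by
        have := sum_card_le (L.map (fun p => fball G p.1 (r * 4 ^ p.2))) hdisj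
        rwa [List.map_map] at this
      have hnat : (∑ i : Fin L.length,
          (gball G (L.get i).1 (2 * (2 * (r * 4 ^ (L.get i).2)))).ncard) ≤ M * n := by
        calc (∑ i : Fin L.length,
              (gball G (L.get i).1 (2 * (2 * (r * 4 ^ (L.get i).2)))).ncard)
            = ∑ i : Fin L.length,
              (fball G (L.get i).1 (r * 4 ^ ((L.get i).2 + 1))).card :=
              Finset.sum_congr rfl (fun i _ => hterm i)
          _ = (L.map (fun p => (fball G p.1 (r * 4 ^ (p.2 + 1))).card)).sum := hsum_eq
          _ ≤ (L.map (fun p => M * (fball G p.1 (r * 4 ^ p.2)).card)).sum :=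
              List.sum_le_sum hgood
          _ = M * (L.map (fun p => (fball G p.1 (r * 4 ^ p.2)).card)).sum := hsum_eq2
          _ ≤ M * n := Nat.mul_le_mul_left M hinner
      have hcast : ((∑ i : Fin L.length,
          (gball G (L.get i).1 (2 * (2 * (r * 4 ^ (L.get i).2)))).ncard : ℕ) : ℝ) ≤
            (M:ℝ) * n := by exact_mod_cast hnat
      have hNpos : (0:ℝ) ≤ (Nbig:ℝ) := by positivity
      nlinarith
end

section
/- For every real ε > 0 there exists a constant C(ε) > 0 such that for every integer n ≥ 2, every connected n-vertex graph G has a +⌈C(ε)·n^{1/2 + ε}⌉ additive emulator with at most C(ε)·n edges. -/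
open SimpleGraph Finset

/-- The weighted distance in an emulator `H` with edge weights `w`:
the minimum total weight of a walk from `s` to `t` (`⊤` if none exists). -/
noncomputable def emulatorDist {V : Type*} (H : SimpleGraph V) (w : Sym2 V → ℕ)
    (s t : V) : ℕ∞ :=
  ⨅ p : H.Walk s t, ((p.edges.map w).sum : ℕ∞)

/-- `H` (with positive integer edge weights `w`) is a `+k` additive emulator of `G`:
for all vertices `s, t`, `dist_G(s,t) ≤ dist_H(s,t) ≤ dist_G(s,t) + k`. -/
def IsAdditiveEmulator {V : Type*} (G H : SimpleGraph V) (w : Sym2 V → ℕ)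
    (k : ℕ) : Prop :=
  (∀ e ∈ H.edgeSet, 0 < w e) ∧
  ∀ s t : V, (G.dist s t : ℕ∞) ≤ emulatorDist H w s t ∧
    emulatorDist H w s t ≤ (G.dist s t : ℕ∞) + (k : ℕ∞)


lemma dist_le_walkSum' {V : Type*} {G H : SimpleGraph V} (hG : G.Connected)
    (w : Sym2 V → ℕ) (hw : ∀ u v : V, H.Adj u v → G.dist u v ≤ w s(u, v))
    {s t : V} (p : H.Walk s t) : G.dist s t ≤ (p.edges.map w).sum := by
  induction p with
  | nil => simp
  | cons h q ih =>
    rename_i u v t'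
    calc G.dist u t' ≤ G.dist u v + G.dist v t' := hG.dist_triangle
      _ ≤ w s(u, v) + (q.edges.map w).sum := Nat.add_le_add (hw _ _ h) ih
      _ = ((Walk.cons h q).edges.map w).sum := by simp

lemma exists_pred {V : Type*} {G : SimpleGraph V} (hG : G.Connected) {s v : V}
    (h : 1 ≤ G.dist s v) : ∃ u, G.Adj u v ∧ G.dist s u + 1 = G.dist s v := by
  obtain ⟨p, hp⟩ := hG.exists_walk_length_eq_dist s v
  have : p.reverse.length = G.dist s v := by simpa using hp
  cases hq : p.reverse with
  | nil => rw [hq] at this; simp only [Walk.length_nil] at this; omega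
  | cons a q =>
    rename_i u
    refine ⟨u, a.symm, ?_⟩
    have hlen : q.length + 1 = G.dist s v := by rw [hq] at this; simpa using this
    have h1 : G.dist s u ≤ q.length := by
      simpa [SimpleGraph.dist_comm] using SimpleGraph.dist_le q
    have h2 : G.dist s v ≤ G.dist s u + 1 := by
      have t1 := hG.dist_triangle (u := s) (v := u) (w := v)
      have t2 : G.dist u v = 1 := SimpleGraph.dist_eq_one_iff_adj.2 a.symm
      omega
    omega


lemma ball_card'' {V : Type*} [Fintype V] [DecidableEq V] {G : SimpleGraph V}
    (hG : G.Connected) (s : V) (i : ℕ) (hx : ∃ x, i < G.dist s x) :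
    i + 1 ≤ (univ.filter fun v => G.dist s v ≤ i).card := by
  induction i with
  | zero =>
    have : s ∈ univ.filter fun v => G.dist s v ≤ 0 := by simp
    exact Finset.card_pos.2 ⟨s, this⟩
  | succ i ih =>
    obtain ⟨x, hx⟩ := hx
    have ihh := ih ⟨x, by omega⟩
    -- find vertex at distance exactly i+1
    obtain ⟨v, hv, hvmin⟩ := Finset.exists_min_image
      (univ.filter fun v => i < G.dist s v) (G.dist s) ⟨x, by simp; omega⟩
    simp only [mem_filter, mem_univ, true_and] at hv
    have hd : G.dist s v = i + 1 := by
      obtain ⟨u, hu, hdu⟩ := exists_pred hG (s := s) (v := v) (by omega)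
      have hle : G.dist s u ≤ i := by
        by_contra hc
        have := hvmin u (by simp; omega)
        omega
      omega
    have hnot : v ∉ (univ.filter fun v => G.dist s v ≤ i) := by simp; omega
    calc i + 2 ≤ (univ.filter fun v => G.dist s v ≤ i).card + 1 := by omega
      _ = (insert v (univ.filter fun v => G.dist s v ≤ i)).card :=
          (Finset.card_insert_of_notMem hnot).symm
      _ ≤ (univ.filter fun v => G.dist s v ≤ i + 1).card := by
          apply Finset.card_le_card
          intro a ha
          simp only [Finset.mem_insert, mem_filter, mem_univ, true_and] at *
          rcases ha with rfl | ha; · omega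
          · omega


lemma exists_net' {V : Type*} [Fintype V] [DecidableEq V] {G : SimpleGraph V}
    (hG : G.Connected) (D : ℕ) (hD : D + 1 ≤ Fintype.card V) :
    ∃ S : Finset V, S.Nonempty ∧ (∀ v : V, ∃ a ∈ S, G.dist v a ≤ 2 * D) ∧
      S.card * (D + 1) ≤ Fintype.card V := by
  classical
  set Sep : Finset V → Prop := fun T => ∀ a ∈ T, ∀ b ∈ T, a ≠ b → 2 * D < G.dist a b with hSep
  obtain ⟨S, hSmem, hSmax⟩ := Finset.exists_max_image
    ((univ : Finset (Finset V)).filter Sep) Finset.card ⟨∅, by simp [hSep]⟩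
  simp only [mem_filter, mem_univ, true_and] at hSmem
  have hmax : ∀ T, Sep T → T.card ≤ S.card := fun T hT =>
    hSmax T (Finset.mem_filter.2 ⟨mem_univ _, hT⟩)
  -- covering
  have hcov : ∀ v : V, ∃ a ∈ S, G.dist v a ≤ 2 * D := by
    intro v
    by_contra hc
    push_neg at hc
    have hv : v ∉ S := fun hv => by have := hc v hv; simp [SimpleGraph.dist_self] at this
    have : Sep (insert v S) := by
      intro a ha b hb hab
      simp only [Finset.mem_insert] at ha hb
      rcases ha with rfl | ha <;> rcases hb with rfl | hb
      · exact absurd rfl hab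
      · exact hc b hb
      · rw [SimpleGraph.dist_comm]; exact hc a ha
      · exact hSmem a ha b hb hab
    have := hmax _ this
    rw [Finset.card_insert_of_notMem hv] at this
    omega
  have hSne : S.Nonempty := by
    have : Nonempty V := Fintype.card_pos_iff.1 (by omega)
    obtain ⟨a, ha, _⟩ := hcov (Classical.arbitrary V)
    exact ⟨a, ha⟩
  refine ⟨S, hSne, hcov, ?_⟩
  -- counting
  by_cases hcard : S.card ≤ 1
  · calc S.card * (D + 1) ≤ 1 * (D + 1) := Nat.mul_le_mul_right _ hcard
      _ ≤ Fintype.card V := by omega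
  · push_neg at hcard
    have hball : ∀ s ∈ S, D + 1 ≤ (univ.filter fun v => G.dist s v ≤ D).card := by
      intro s hs
      obtain ⟨t, ht, hts⟩ := Finset.exists_mem_ne hcard s
      refine ball_card'' hG s D ⟨t, ?_⟩
      have := hSmem s hs t ht (Ne.symm hts)
      omega
    have hdisj : ∀ s ∈ S, ∀ t ∈ S, s ≠ t →
        Disjoint (univ.filter fun v => G.dist s v ≤ D)
          (univ.filter fun v => G.dist t v ≤ D) := by
      intro s hs t ht hst
      rw [Finset.disjoint_left]
      intro v hv hv'
      simp only [mem_filter, mem_univ, true_and] at hv hv'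
      have h1 := hG.dist_triangle (u := s) (v := v) (w := t)
      have h2 : G.dist v t = G.dist t v := SimpleGraph.dist_comm ..
      have := hSmem s hs t ht hst
      omega
    calc S.card * (D + 1) = ∑ s ∈ S, (D + 1) := by simp [Nat.mul_comm]
      _ ≤ ∑ s ∈ S, (univ.filter fun v => G.dist s v ≤ D).card :=
          Finset.sum_le_sum hball
      _ = (S.biUnion fun s => univ.filter fun v => G.dist s v ≤ D).card :=
          (Finset.card_biUnion hdisj).symm
      _ ≤ Fintype.card V := by
          rw [← Finset.card_univ]
          exact Finset.card_le_card (Finset.subset_univ _)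


lemma step_walk {V : Type*} {H : SimpleGraph V} (w : Sym2 V → ℕ) {a b : V}
    (h : a = b ∨ H.Adj a b) :
    ∃ p : H.Walk a b, (p.edges.map w).sum ≤ w s(a, b) := by
  rcases h with rfl | h
  · exact ⟨Walk.nil, by simp⟩
  · exact ⟨Walk.cons h Walk.nil, by simp⟩

theorem sqrt_error_emulator :
    ∀ ε : ℝ, 0 < ε → ∃ C : ℝ, 0 < C ∧
      ∀ n : ℕ, 2 ≤ n → ∀ G : SimpleGraph (Fin n), G.Connected →
        ∃ (H : SimpleGraph (Fin n)) (w : Sym2 (Fin n) → ℕ),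
          IsAdditiveEmulator G H w ⌈C * (n : ℝ) ^ (1 / 2 + ε)⌉₊ ∧
          (H.edgeSet.ncard : ℝ) ≤ C * n := by
  intro ε hε
  refine ⟨8, by norm_num, ?_⟩
  intro n hn G hG
  classical
  set D := Nat.sqrt n with hDdef
  have hDn : D + 1 ≤ n := Nat.sqrt_lt_self (by omega)
  have hcardV : Fintype.card (Fin n) = n := Fintype.card_fin n
  obtain ⟨S, hSne, hcov, hScard⟩ := exists_net' hG D (by rw [hcardV]; exact hDn)
  rw [hcardV] at hScard
  -- nearest net point
  set f : Fin n → Fin n := fun v => (hcov v).choose with hfdef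
  have hfS : ∀ v, f v ∈ S := fun v => (hcov v).choose_spec.1
  have hfd : ∀ v, G.dist v (f v) ≤ 2 * D := fun v => (hcov v).choose_spec.2
  -- the emulator graph
  set H : SimpleGraph (Fin n) :=
    { Adj := fun u v => u ≠ v ∧ ((u ∈ S ∧ v ∈ S) ∨ f u = v ∨ f v = u)
      symm := by
        refine ⟨?_⟩; intro u v ⟨h1, h2⟩
        exact ⟨h1.symm, by tauto⟩
      loopless := ⟨fun v h => h.1 rfl⟩ } with hHdef
  set w : Sym2 (Fin n) → ℕ := Sym2.lift ⟨fun a b => G.dist a b,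
    fun a b => SimpleGraph.dist_comm ..⟩ with hwdef
  have hwmk : ∀ a b : Fin n, w s(a, b) = G.dist a b := fun a b => rfl
  have hw : ∀ u v : Fin n, H.Adj u v → G.dist u v ≤ w s(u, v) := fun u v _ => le_rfl
  refine ⟨H, w, ⟨?_, ?_⟩, ?_⟩
  · -- positive weights
    intro e he
    induction e using Sym2.ind with
    | _ u v =>
      rw [SimpleGraph.mem_edgeSet] at he
      rw [hwmk]
      exact hG.pos_dist_of_ne he.1
  · -- distance bounds
    intro s t
    constructor
    · exact le_iInf fun p => Nat.cast_le.2 (dist_le_walkSum' hG w hw p)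
    · -- upper bound: walk s → f s → f t → t
      have h1 : s = f s ∨ H.Adj s (f s) := by
        by_cases h : s = f s
        · exact Or.inl h
        · exact Or.inr ⟨h, Or.inr (Or.inl rfl)⟩
      have h2 : f s = f t ∨ H.Adj (f s) (f t) := by
        by_cases h : f s = f t
        · exact Or.inl h
        · exact Or.inr ⟨h, Or.inl ⟨hfS s, hfS t⟩⟩
      have h3 : f t = t ∨ H.Adj (f t) t := by
        by_cases h : f t = t
        · exact Or.inl h
        · exact Or.inr ⟨h, Or.inr (Or.inr rfl)⟩
      obtain ⟨p1, hp1⟩ := step_walk w h1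
      obtain ⟨p2, hp2⟩ := step_walk w h2
      obtain ⟨p3, hp3⟩ := step_walk w h3
      have key : emulatorDist H w s t ≤ ((G.dist s t + 8 * D : ℕ) : ℕ∞) := by
        refine le_trans (iInf_le _ (p1.append (p2.append p3))) ?_
        rw [Nat.cast_le]
        have hsum : ((p1.append (p2.append p3)).edges.map w).sum =
            (p1.edges.map w).sum + ((p2.edges.map w).sum + (p3.edges.map w).sum) := by
          simp [Walk.edges_append]
        rw [hsum]
        have e1 : w s(s, f s) = G.dist s (f s) := rfl
        have e2 : w s(f s, f t) = G.dist (f s) (f t) := rfl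
        have e3 : w s(f t, t) = G.dist (f t) t := rfl
        have d1 := hfd s
        have d3 := hfd t
        have t1 : G.dist (f s) (f t) ≤ G.dist (f s) s + G.dist s (f t) := hG.dist_triangle
        have t2 : G.dist s (f t) ≤ G.dist s t + G.dist t (f t) := hG.dist_triangle
        have c1 : G.dist (f s) s = G.dist s (f s) := SimpleGraph.dist_comm ..
        have c2 : G.dist (f t) t = G.dist t (f t) := SimpleGraph.dist_comm ..
        rw [e1] at hp1; rw [e2] at hp2; rw [e3] at hp3
        omega
      refine key.trans ?_
      -- need 8 * D ≤ ⌈8 * n ^ (1/2+ε)⌉₊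
      have h8D : 8 * D ≤ ⌈(8 : ℝ) * (n : ℝ) ^ (1 / 2 + ε)⌉₊ := by
        have hD_real : (D : ℝ) ≤ (n : ℝ) ^ ((1 : ℝ) / 2) := by
          rw [← Real.sqrt_eq_rpow]
          have := Real.nat_sqrt_le_real_sqrt (a := n)
          exact this
        have hpow : (n : ℝ) ^ ((1 : ℝ) / 2) ≤ (n : ℝ) ^ (1 / 2 + ε) := by
          apply Real.rpow_le_rpow_of_exponent_le
          · exact_mod_cast Nat.one_le_cast.2 (by omega)
          · linarith
        have : ((8 * D : ℕ) : ℝ) ≤ (8 : ℝ) * (n : ℝ) ^ (1 / 2 + ε) := by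
          push_cast
          nlinarith [hD_real.trans hpow]
        calc (8 * D : ℕ) ≤ ⌈((8 * D : ℕ) : ℝ)⌉₊ := by rw [Nat.ceil_natCast]
          _ ≤ ⌈(8 : ℝ) * (n : ℝ) ^ (1 / 2 + ε)⌉₊ := Nat.ceil_le_ceil this
      push_cast
      have : ((8 * D : ℕ) : ℕ∞) ≤ ((⌈(8 : ℝ) * (n : ℝ) ^ (1 / 2 + ε)⌉₊ : ℕ) : ℕ∞) :=
        Nat.cast_le.2 h8D
      push_cast at this
      exact add_le_add_right this _
  · -- edge count
    have hsub : H.edgeSet ⊆ (fun p : Fin n × Fin n => s(p.1, p.2)) '' (↑S ×ˢ ↑S) ∪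
        Set.range (fun v : Fin n => s(v, f v)) := by
      intro e he
      induction e using Sym2.ind with
      | _ u v =>
        rw [SimpleGraph.mem_edgeSet] at he
        rcases he.2 with ⟨hu, hv⟩ | h | h
        · exact Or.inl ⟨(u, v), by simp [hu, hv]⟩
        · exact Or.inr ⟨u, by show s(u, f u) = s(u, v); rw [h]⟩
        · refine Or.inr ⟨v, ?_⟩
          show s(v, f v) = s(u, v)
          rw [h]
          exact Sym2.eq_swap
    have hA : ((fun p : Fin n × Fin n => s(p.1, p.2)) '' (↑S ×ˢ ↑S)).ncard ≤
        S.card * S.card := by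
      calc ((fun p : Fin n × Fin n => s(p.1, p.2)) '' (↑S ×ˢ ↑S)).ncard
          ≤ ((↑S ×ˢ ↑S : Set (Fin n × Fin n))).ncard := Set.ncard_image_le (Set.toFinite _)
        _ = S.card * S.card := by
            rw [← Finset.coe_product, Set.ncard_coe_finset, Finset.card_product]
    have hB : (Set.range (fun v : Fin n => s(v, f v))).ncard ≤ n := by
      calc (Set.range (fun v : Fin n => s(v, f v))).ncard
          ≤ (Set.univ : Set (Fin n)).ncard := by
            rw [← Set.image_univ]
            exact Set.ncard_image_le (Set.toFinite _)
        _ = n := by rw [Set.ncard_univ]; simp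
    have hS2 : S.card * S.card ≤ n := by
      have h2 : n < (D + 1) * (D + 1) := Nat.lt_succ_sqrt n
      nlinarith [hScard, h2, S.card.zero_le]
    have : H.edgeSet.ncard ≤ 2 * n := by
      calc H.edgeSet.ncard ≤ _ := Set.ncard_le_ncard hsub (Set.toFinite _)
        _ ≤ ((fun p : Fin n × Fin n => s(p.1, p.2)) '' (↑S ×ˢ ↑S)).ncard +
            (Set.range (fun v : Fin n => s(v, f v))).ncard := Set.ncard_union_le _ _
        _ ≤ 2 * n := by omega
    calc (H.edgeSet.ncard : ℝ) ≤ ((2 * n : ℕ) : ℝ) := Nat.cast_le.2 this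
      _ ≤ 8 * n := by push_cast; nlinarith [Nat.cast_nonneg (α := ℝ) n]
end
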